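/- Let C be a category with a stable system of monics M, having pullbacks, pushouts and final pullback complements along M-morphisms, such that pushouts along M-morphisms are stable under pullbacks and pushouts along M-morphisms are pullbacks. Then the domain functor dom : PB_h(C, M) → C from the category of pullback squares along M-morphisms (under horizontal composition) is a Grothendieck fibration, with Cartesian liftings given by final pullback complements. -/

import Mathlib

open CategoryTheory CategoryTheory.Limits

universe v u

variable {C : Type u} [Category.{v} C]

/-- A stable system of monics. -/
structure StableSystemOfMonics (C : Type u) [Category.{v} C] where
  P : MorphismProperty C
  mono_of : ∀ {X Y : C} (f : X ⟶ Y), P f → Mono f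
  iso_mem : ∀ {X Y : C} (f : X ⟶ Y), IsIso f → P f
  comp_mem : ∀ {X Y Z : C} (f : X ⟶ Y) (g : Y ⟶ Z), P f → P g → P (f ≫ g)
  pullback_stable : ∀ {W X Y Z : C} (f' : W ⟶ X) (m' : W ⟶ Y) (m : X ⟶ Z) (f : Y ⟶ Z),
    P m → IsPullback f' m' m f → P m'

/-- `(n, g)` is a final pullback complement of `(f, m)`. -/
structure IsFPC {A B B' F : C} (f : A ⟶ B) (m : B ⟶ B') (n : A ⟶ F) (g : F ⟶ B') : Prop where
  isPullback : IsPullback f n m g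
  final : ∀ {X Y : C} (x : X ⟶ B) (p : X ⟶ Y) (y : Y ⟶ B') (t : X ⟶ A),
    IsPullback x p m y → t ≫ f = x →
    ∃! u : Y ⟶ F, p ≫ u = t ≫ n ∧ u ≫ g = y

/-- Objects of `PB_h(C, M)`: the morphisms of `M`. -/
structure MArrow (M : StableSystemOfMonics C) where
  dom : C
  cod : C
  hom : dom ⟶ cod
  mem : M.P hom

variable {M : StableSystemOfMonics C}

/-- Morphisms of `PB_h(C, M)`: pullback squares along arbitrary `C`-morphisms. -/
@[ext]
structure PBhHom (m n : MArrow M) where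
  top : m.dom ⟶ n.dom
  bot : m.cod ⟶ n.cod
  isPB : IsPullback top m.hom n.hom bot

instance : Category (MArrow M) where
  Hom m n := PBhHom m n
  id m := ⟨𝟙 _, 𝟙 _, IsPullback.of_horiz_isIso ⟨by simp⟩⟩
  comp φ ψ := ⟨φ.top ≫ ψ.top, φ.bot ≫ ψ.bot, φ.isPB.paste_horiz ψ.isPB⟩
  id_comp φ := PBhHom.ext (by dsimp; simp) (by dsimp; simp)
  comp_id φ := PBhHom.ext (by dsimp; simp) (by dsimp; simp)
  assoc φ ψ χ := PBhHom.ext (by dsimp; simp) (by dsimp; simp)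

@[simp] lemma PBh_comp_top {m n p : MArrow M} (φ : m ⟶ n) (ψ : n ⟶ p) :
    (φ ≫ ψ).top = φ.top ≫ ψ.top := rfl

@[simp] lemma PBh_comp_bot {m n p : MArrow M} (φ : m ⟶ n) (ψ : n ⟶ p) :
    (φ ≫ ψ).bot = φ.bot ≫ ψ.bot := rfl

/-- The domain functor `dom : PB_h(C, M) ⥤ C`. -/
def domFunctor (M : StableSystemOfMonics C) : MArrow M ⥤ C where
  obj m := m.dom
  map φ := φ.top

section Fibration

universe v₁ v₂ u₁ u₂

variable {E : Type u₁} [Category.{v₁} E] {B : Type u₂} [Category.{v₂} B]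

/-- Cartesian morphism for a functor `G`. -/
def IsCartesianLift (G : E ⥤ B) {e' e : E} (γ : e' ⟶ e) : Prop :=
  ∀ ⦃e'' : E⦄ (α : e'' ⟶ e) (g : G.obj e'' ⟶ G.obj e'),
    G.map α = g ≫ G.map γ → ∃! β : e'' ⟶ e', β ≫ γ = α ∧ G.map β = g

/-- `G : E ⥤ B` is a Grothendieck fibration. -/
def IsGrothendieckFibration (G : E ⥤ B) : Prop :=
  ∀ ⦃e : E⦄ ⦃b : B⦄ (f : b ⟶ G.obj e),
    ∃ (e' : E) (γ : e' ⟶ e) (h : G.obj e' = b),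
      eqToHom h.symm ≫ G.map γ = f ∧ IsCartesianLift G γ

end Fibration

/-- `C` has pushouts along `M`-morphisms. -/
def HasPushoutsAlongM (M : StableSystemOfMonics C) : Prop :=
  ∀ {X Y Z : C} (f : X ⟶ Y) (m : X ⟶ Z), M.P m →
    ∃ (W : C) (inl : Y ⟶ W) (inr : Z ⟶ W), IsPushout f m inl inr

/-- `C` has final pullback complements along `M`-morphisms. -/
def HasFPCsAlongM (M : StableSystemOfMonics C) : Prop :=
  ∀ {A B B' : C} (f : A ⟶ B) (m : B ⟶ B'), M.P m →
    ∃ (F : C) (n : A ⟶ F) (g : F ⟶ B'), IsFPC f m n g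

/-- Pushouts along `M`-morphisms are stable under pullbacks: in every commutative
cube over a pushout along an `M`-morphism whose four vertical faces are pullbacks,
the top face is a pushout. -/
def PushoutsAlongMStableUnderPullback (M : StableSystemOfMonics C) : Prop :=
  ∀ {X Y Z W X' Y' Z' W' : C}
    (f : X ⟶ Y) (m : X ⟶ Z) (g : Y ⟶ W) (n : Z ⟶ W)
    (f' : X' ⟶ Y') (m' : X' ⟶ Z') (g' : Y' ⟶ W') (n' : Z' ⟶ W')
    (x : X' ⟶ X) (y : Y' ⟶ Y) (z : Z' ⟶ Z) (w : W' ⟶ W),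
    M.P m → IsPushout f m g n →
    IsPullback f' x y f → IsPullback m' x z m →
    IsPullback g' y w g → IsPullback n' z w n →
    IsPushout f' m' g' n'

/-- Pushouts along `M`-morphisms are pullbacks. -/
def PushoutsAlongMArePullbacks (M : StableSystemOfMonics C) : Prop :=
  ∀ {X Y Z W : C} (f : X ⟶ Y) (m : X ⟶ Z) (g : Y ⟶ W) (n : Z ⟶ W),
    M.P m → IsPushout f m g n → IsPullback f m g n

/-- Theorem (fibrational property of the domain functor): if `C` has pullbacks,
has pushouts and FPCs along `M`-morphisms, pushouts along `M`-morphisms are stable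
under pullbacks, and pushouts along `M`-morphisms are pullbacks, then the domain
functor `dom : PB_h(C, M) ⥤ C` is a Grothendieck fibration, with the Cartesian
liftings given by final pullback complements. -/
theorem domFunctor_isGrothendieckFibration (M : StableSystemOfMonics C)
    [HasPullbacks C]
    (hpo : HasPushoutsAlongM M) (hfpc : HasFPCsAlongM M)
    (hstab : PushoutsAlongMStableUnderPullback M)
    (hpopb : PushoutsAlongMArePullbacks M) :
    IsGrothendieckFibration (domFunctor M) ∧
    ∀ (n : MArrow M) ⦃X : C⦄ (f : X ⟶ n.dom),
      ∃ (F : C) (nn : X ⟶ F) (g : F ⟶ n.cod) (hnn : M.P nn)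
        (hFPC : IsFPC f n.hom nn g),
        IsCartesianLift (domFunctor M)
          (show (⟨X, F, nn, hnn⟩ : MArrow M) ⟶ n from ⟨f, g, hFPC.isPullback⟩) := by
  have key : ∀ (n : MArrow M) ⦃X : C⦄ (f : X ⟶ n.dom),
      ∃ (F : C) (nn : X ⟶ F) (g : F ⟶ n.cod) (hnn : M.P nn)
        (hFPC : IsFPC f n.hom nn g),
        IsCartesianLift (domFunctor M)
          (show (⟨X, F, nn, hnn⟩ : MArrow M) ⟶ n from ⟨f, g, hFPC.isPullback⟩) := by
    intro n X f
    obtain ⟨F, nn, g, hFPC⟩ := hfpc f n.hom n.mem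
    have hnn : M.P nn := M.pullback_stable f nn n.hom g n.mem hFPC.isPullback
    refine ⟨F, nn, g, hnn, hFPC, ?_⟩
    intro p α g0 hg0
    have hg0' : α.top = g0 ≫ f := hg0
    obtain ⟨u, ⟨hu1, hu2⟩, huniq⟩ := hFPC.final α.top p.hom α.bot g0 α.isPB hg0'.symm
    have hPB : IsPullback g0 p.hom nn u := by
      refine IsPullback.of_right ?_ hu1.symm hFPC.isPullback
      have : IsPullback α.top p.hom n.hom α.bot := α.isPB
      rwa [hg0', show α.bot = u ≫ g from hu2.symm] at this
    refine ⟨⟨g0, u, hPB⟩, ⟨?_, rfl⟩, ?_⟩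
    · exact PBhHom.ext hg0'.symm hu2
    · rintro β ⟨hβ1, hβ2⟩
      have htop : β.top = g0 := hβ2
      have hbot : β.bot = u := by
        apply huniq
        constructor
        · rw [← β.isPB.w, htop]
        · have := congrArg PBhHom.bot hβ1
          simpa using this
      exact PBhHom.ext htop hbot
  refine ⟨?_, key⟩
  intro e b f
  obtain ⟨F, nn, g, hnn, hFPC, hcart⟩ := key e f
  exact ⟨⟨b, F, nn, hnn⟩, ⟨f, g, hFPC.isPullback⟩, rfl, by simp [domFunctor]; exact Category.id_comp f, hcart⟩
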